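/- Let α ∈ NC_n and β, γ ∈ NC_{n'} be noncrossing matchings such that β ↗_i γ for some 2 ≤ i ≤ 2n'−2. Then, for the Temperley–Lieb operator e_{2n+i} acting on NC_{n+n'}, the preimage of the concatenation αβ is e_{2n+i}^{−1}(αβ) = { ασ : σ ∈ NC_{n'} with e_i(σ) = β }. -/

import Mathlib

attribute [local instance] Classical.propDecidable

open MvPolynomial

/-! ### Noncrossing matchings -/

/-- `f` encodes a noncrossing perfect matching of the points `0, …, 2n-1`
(point `p` of the paper, which is 1-indexed, corresponds to index `p-1`):
`f` is a fixed-point-free involution and no two arches cross. -/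
def IsNCMatching (n : ℕ) (f : Fin (2*n) → Fin (2*n)) : Prop :=
  (∀ i, f (f i) = i) ∧ (∀ i, f i ≠ i) ∧
    ∀ i j : Fin (2*n), i < j → j < f i → f i < f j → False

/-- The type of noncrossing matchings of size `n`. -/
def NCM (n : ℕ) := {f : Fin (2*n) → Fin (2*n) // IsNCMatching n f}

noncomputable instance (n : ℕ) : Fintype (NCM n) := by
  unfold NCM; exact Fintype.ofFinite _

/-- The noncrossing matching `()_n` consisting of `n` nested arches. -/
def nestedNC (n : ℕ) : NCM n :=
  ⟨fun i => ⟨2*n - 1 - i.val, by have := i.isLt; omega⟩, by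
    refine ⟨fun i => ?_, fun i => ?_, fun i j h1 h2 h3 => ?_⟩
    · have := i.isLt
      apply Fin.ext
      show 2*n - 1 - (2*n - 1 - i.val) = i.val
      omega
    · have := i.isLt
      intro h
      have h' : 2*n - 1 - i.val = i.val := congrArg Fin.val h
      omega
    · have hi := i.isLt; have hj := j.isLt
      rw [Fin.lt_def] at h1 h2 h3
      have e2 : j.val < 2*n - 1 - i.val := h2
      have e3 : 2*n - 1 - i.val < 2*n - 1 - j.val := h3
      omega⟩

/-- The Temperley–Lieb operator `e_j` (with `j` the 1-indexed label of the paper,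
acting on points `j`, `j+1`, cyclically identifying `2n+1` with `1`;
point `p` corresponds to index `p-1`). -/
def TLe (m : ℕ) (j : ℕ) (f : Fin m → Fin m) : Fin m → Fin m :=
  fun i =>
    let a : Fin m := ⟨(j - 1) % m, Nat.mod_lt _ i.pos⟩
    let b : Fin m := ⟨j % m, Nat.mod_lt _ i.pos⟩
    if i = a then b else if i = b then a
    else if f i = a then f b else if f i = b then f a else f i

/-- Concatenation `σπ` of two matchings (as functions on points). -/
def concatF (n n' : ℕ) (f : Fin (2*n) → Fin (2*n)) (g : Fin (2*n') → Fin (2*n')) :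
    Fin (2*(n+n')) → Fin (2*(n+n')) := fun i =>
  if h : i.val < 2*n then
    ⟨(f ⟨i.val, h⟩).val, by have := (f ⟨i.val, h⟩).isLt; omega⟩
  else
    ⟨2*n + (g ⟨i.val - 2*n, by have := i.isLt; omega⟩).val,
      by have := (g ⟨i.val - 2*n, by have := i.isLt; omega⟩).isLt; omega⟩

/-- `(π)_m`: the matching `π` (of size `n`) surrounded by `m` nested arches. -/
def nestF (n m : ℕ) (f : Fin (2*n) → Fin (2*n)) :
    Fin (2*(n+m)) → Fin (2*(n+m)) := fun i =>
  if h : i.val < m ∨ 2*n + m ≤ i.val then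
    ⟨2*(n+m) - 1 - i.val, by have := i.isLt; omega⟩
  else
    ⟨m + (f ⟨i.val - m, by have := i.isLt; omega⟩).val,
      by have := (f ⟨i.val - m, by have := i.isLt; omega⟩).isLt; omega⟩

/-- Rotation `ρ` : `i` and `j` are matched in `ρ(π)` iff `i-1` and `j-1` are matched in `π`. -/
def rotF (m : ℕ) (f : Fin m → Fin m) : Fin m → Fin m := fun i =>
  ⟨((f ⟨(i.val + (m - 1)) % m, Nat.mod_lt _ i.pos⟩).val + 1) % m, Nat.mod_lt _ i.pos⟩

/-- The length of the `i`-th row (0-indexed, from the top) of the Young diagram `λ(π)`: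
if `v_0 < … < v_{n-1}` are the (0-indexed) positions of the left endpoints of the arches,
then the `i`-th row from the top has `v_{n-1-i} - (n-1-i)` boxes. -/
noncomputable def lamRowF (n : ℕ) (f : Fin (2*n) → Fin (2*n)) (i : ℕ) : ℕ :=
  if i < n then
    (((Finset.univ.filter fun j : Fin (2*n) => j < f j).sort (· ≤ ·)).map Fin.val).getD
        (n - 1 - i) 0 - (n - 1 - i)
  else 0

/-- `|λ(π)|`, the number of boxes of the Young diagram of `π`. -/
noncomputable def numBoxes (n : ℕ) (f : Fin (2*n) → Fin (2*n)) : ℕ :=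
  ∑ i ∈ Finset.range n, lamRowF n f i

/-- `σ ≤ π`, i.e. `λ(σ)` is contained in `λ(π)`. -/
noncomputable def LamLe (n : ℕ) (f g : Fin (2*n) → Fin (2*n)) : Prop :=
  ∀ i, lamRowF n f i ≤ lamRowF n g i

/-- `σ < π`, i.e. `λ(σ)` is strictly contained in `λ(π)`. -/
noncomputable def LamLt (n : ℕ) (f g : Fin (2*n) → Fin (2*n)) : Prop :=
  LamLe n f g ∧ ∃ i, lamRowF n f i < lamRowF n g i

/-- `σ ↗_j π` : `λ(π)` is obtained from `λ(σ)` by adding one box on the `j`-th diagonal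
(the box in 0-indexed row `r` and 0-indexed column `c` lies on diagonal `n + c - r`,
matching the paper's 1-indexed `n + c - i`). -/
noncomputable def UpArrow (n : ℕ) (f g : Fin (2*n) → Fin (2*n)) (j : ℕ) : Prop :=
  ∃ r, r < n ∧ lamRowF n g r = lamRowF n f r + 1 ∧
    (∀ i, i ≠ r → lamRowF n g i = lamRowF n f i) ∧
    n + lamRowF n f r - r = j

/-- The number of boxes of `λ(π)` lying on the `d`-th diagonal. -/
noncomputable def boxesOnDiag (n : ℕ) (f : Fin (2*n) → Fin (2*n)) (d : ℕ) : ℕ :=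
  ((Finset.range n ×ˢ Finset.range n).filter
    (fun rc => rc.2 < lamRowF n f rc.1 ∧ n + rc.2 - rc.1 = d)).card

/-- The cells `(row, column)` (0-indexed) of the Young diagram `λ(π)`. -/
noncomputable def cellsF (n : ℕ) (f : Fin (2*n) → Fin (2*n)) : Finset (ℕ × ℕ) :=
  (Finset.range n ×ˢ Finset.range n).filter fun rc => rc.2 < lamRowF n f rc.1

/-- `f_{λ(π)}`: the number of standard Young tableaux of shape `λ(π)`, i.e. of
bijective fillings of the cells with `0, …, |λ|-1` strictly increasing along
rows and down columns. -/
noncomputable def numSYT (n : ℕ) (f : Fin (2*n) → Fin (2*n)) : ℕ :=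
  Nat.card {T : {c : ℕ × ℕ // c ∈ cellsF n f} ≃ Fin (cellsF n f).card //
    (∀ a b : {c : ℕ × ℕ // c ∈ cellsF n f}, a.1.1 = b.1.1 → a.1.2 < b.1.2 → T a < T b) ∧
    (∀ a b : {c : ℕ × ℕ // c ∈ cellsF n f}, a.1.2 = b.1.2 → a.1.1 < b.1.1 → T a < T b)}

/-! ### Fully packed loops -/

/-- The vertices relevant for an FPL of size `n`: the `n × n` grid vertices
(`(column, row)`, 0-indexed, row 0 at the top) together with the `4n` external
edge endpoints, indexed counterclockwise starting with the topmost on the left side. -/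
def FVert (n : ℕ) := (Fin n × Fin n) ⊕ (Fin (4*n))

/-- The grid vertex to which the `t`-th external edge is attached
(`t` counted counterclockwise: down the left side, then along the bottom,
up the right side, and along the top). -/
def extVert {n : ℕ} (t : Fin (4*n)) : Fin n × Fin n :=
  if h1 : t.val < n then (⟨0, by omega⟩, ⟨t.val, h1⟩)
  else if h2 : t.val < 2*n then (⟨t.val - n, by omega⟩, ⟨n - 1, by omega⟩)
  else if h3 : t.val < 3*n then (⟨n - 1, by omega⟩, ⟨n - 1 - (t.val - 2*n), by omega⟩)
  else (⟨n - 1 - (t.val - 3*n), by have := t.isLt; omega⟩, ⟨0, by have := t.isLt; omega⟩)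

/-- Adjacency in the `n × n` grid graph. -/
def gridAdj {n : ℕ} (u v : Fin n × Fin n) : Prop :=
  (u.1 = v.1 ∧ (u.2.val + 1 = v.2.val ∨ v.2.val + 1 = u.2.val)) ∨
  (u.2 = v.2 ∧ (u.1.val + 1 = v.1.val ∨ v.1.val + 1 = u.1.val))

/-- Adjacency in the `n × n` grid together with all `4n` external edges. -/
def fullAdj {n : ℕ} : FVert n → FVert n → Prop
  | Sum.inl u, Sum.inl v => gridAdj u v
  | Sum.inl u, Sum.inr t => u = extVert t
  | Sum.inr t, Sum.inl u => u = extVert t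
  | Sum.inr _, Sum.inr _ => False

/-- A fully packed loop configuration of size `n`: a subgraph of the grid with
external edges in which every grid vertex has degree `2` and which contains
exactly every other external edge, beginning with the topmost at the left side. -/
structure FPL (n : ℕ) where
  adj : FVert n → FVert n → Prop
  symm : ∀ u v, adj u v → adj v u
  sub : ∀ u v, adj u v → fullAdj u v
  degGrid : ∀ u : Fin n × Fin n, {v | adj (Sum.inl u) v}.ncard = 2
  degExtEven : ∀ t : Fin (4*n), t.val % 2 = 0 → {v | adj (Sum.inr t) v}.ncard = 1
  degExtOdd : ∀ t : Fin (4*n), t.val % 2 = 1 → {v | adj (Sum.inr t) v}.ncard = 0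

/-- `F` has link pattern `f` : the chosen external edges, numbered counterclockwise by
`Fin (2n)` (the `k`-th chosen one being the external edge at boundary position `2k`),
are matched in pairs by `f` according to connectivity in `F`. -/
def hasLinkPattern {n : ℕ} (F : FPL n) (f : Fin (2*n) → Fin (2*n)) : Prop :=
  ∀ k l : Fin (2*n), f k = l ↔ (k ≠ l ∧
    Relation.ReflTransGen F.adj
      (Sum.inr ⟨2*k.val, by have := k.isLt; omega⟩)
      (Sum.inr ⟨2*l.val, by have := l.isLt; omega⟩))

/-- `A_π`: the number of FPLs of size `n` with link pattern `π`. -/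
noncomputable def countFPL (n : ℕ) (f : Fin (2*n) → Fin (2*n)) : ℕ :=
  Nat.card {F : FPL n // hasLinkPattern F f}

/-! ### Wheel polynomials and the operators `S_k`, `D_k` -/

/-- The cyclic successor `k+1` on `Fin m`. -/
def cycS {m : ℕ} (i : Fin m) : Fin m := ⟨(i.val + 1) % m, Nat.mod_lt _ i.pos⟩

/-- `S_k`: the algebra automorphism exchanging the variables `z_k` and `z_{k+1}`
(cyclically, `z_{2n+1} := z_1`). -/
noncomputable def swapVar {F : Type*} [CommSemiring F] {N : ℕ} (k : Fin N)
    (f : MvPolynomial (Fin N) F) : MvPolynomial (Fin N) F :=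
  MvPolynomial.rename (Equiv.swap k (cycS k)) f

/-- `D` is the operator `D_k : f ↦ ((q z_k - q⁻¹ z_{k+1})/(z_{k+1} - z_k))·(S_k f - f)`,
characterized by `(z_{k+1} - z_k) · D f = (q z_k - q⁻¹ z_{k+1}) · (S_k f - f)`. -/
def IsDOp {F : Type*} [Field F] {N : ℕ} (q : F) (k : Fin N)
    (D : MvPolynomial (Fin N) F → MvPolynomial (Fin N) F) : Prop :=
  ∀ f, (X (cycS k) - X k) * D f = (C q * X k - C q⁻¹ * X (cycS k)) * (swapVar k f - f)

/-- A wheel polynomial of order `n`: homogeneous of degree `n(n-1)` and vanishing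
under every substitution `z_j := q² z_i`, `z_k := q⁴ z_i` with `i < j < k`. -/
def IsWheel {F : Type*} [Field F] (q : F) (n : ℕ) (p : MvPolynomial (Fin (2*n)) F) : Prop :=
  p.IsHomogeneous (n*(n-1)) ∧
  ∀ i j k : Fin (2*n), i < j → j < k →
    (MvPolynomial.aeval (fun t : Fin (2*n) =>
      if t = j then C (q^2) * X i else if t = k then C (q^4) * X i else X t)) p = 0

/-- The vector space `W_n[z]` of wheel polynomials of order `n`, as a submodule. -/
noncomputable def wheelSpace (F : Type*) [Field F] (q : F) (n : ℕ) :
    Submodule F (MvPolynomial (Fin (2*n)) F) :=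
  (homogeneousSubmodule (Fin (2*n)) F (n*(n-1))) ⊓
  ⨅ (i : Fin (2*n)) (j : Fin (2*n)) (k : Fin (2*n)) (_ : i < j) (_ : j < k),
    LinearMap.ker (MvPolynomial.aeval (R := F) (fun t : Fin (2*n) =>
      if t = j then C (q^2) * X i else if t = k then C (q^4) * X i else X t)).toLinearMap

/-- `Ψ_{()_n} = (q - q⁻¹)^{-n(n-1)} ∏_{1 ≤ i < j ≤ n} (q z_i - q⁻¹ z_j)(q z_{n+i} - q⁻¹ z_{n+j})`. -/
noncomputable def PsiEmpty {F : Type*} [Field F] (q : F) (n : ℕ) :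
    MvPolynomial (Fin (2*n)) F :=
  C (((q - q⁻¹)^(n*(n-1)))⁻¹) *
    ∏ ij ∈ Finset.univ.filter (fun ij : Fin n × Fin n => ij.1 < ij.2),
      ((C q * X ⟨ij.1.val, by have := ij.1.isLt; omega⟩ -
        C q⁻¹ * X ⟨ij.2.val, by have := ij.2.isLt; omega⟩) *
       (C q * X ⟨n + ij.1.val, by have := ij.1.isLt; omega⟩ -
        C q⁻¹ * X ⟨n + ij.2.val, by have := ij.2.isLt; omega⟩))

/-- The `Fin (2n)`-index of the operator `D_j` for the paper's (1-indexed, cyclic,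
`D_{j+2n} = D_j`) index `j`. -/
def finOfIdx (N : ℕ) (hN : 0 < N) (j : ℕ) : Fin N := ⟨(j - 1) % N, Nat.mod_lt _ hN⟩

/-- The list of `D`-operator indices for `D_π`: for each box of `λ(π)`, read row by row
from top to bottom and left to right within each row, the (0-indexed) index of the
diagonal `n + c - i` of that box. -/
def diagList1 (n : ℕ) (lam : ℕ → ℕ) : List (Fin (2*n)) :=
  (List.finRange n).flatMap fun i =>
    (List.range (lam i.val)).map fun c =>
      ⟨(n - 1 + c - i.val) % (2*n), Nat.mod_lt _ (by have := i.isLt; omega)⟩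

/-- The wheel polynomial `D_π`, obtained from `Ψ_{()_n}` by successively applying,
for each box of `λ(π)` read row by row from top to bottom and left to right,
the operator `D` indexed by the diagonal of that box. -/
noncomputable def DpiF {F : Type*} [Field F] (q : F) (n : ℕ)
    (D : Fin (2*n) → MvPolynomial (Fin (2*n)) F → MvPolynomial (Fin (2*n)) F)
    (f : Fin (2*n) → Fin (2*n)) : MvPolynomial (Fin (2*n)) F :=
  (diagList1 n (lamRowF n f)).foldl (fun p k => D k p) (PsiEmpty q n)

/-- Operator indices for the second stage of `D_{π₁,π₂}`: for each box of `λ(π₂)`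
(in reading order) the index of `D_{c-i}` (paper 1-indexed diagonal `c - i`, taken
mod `2n`). -/
def diagList2 (n rows : ℕ) (h : rows ≤ n) (lam : ℕ → ℕ) : List (Fin (2*n)) :=
  (List.finRange rows).flatMap fun i =>
    (List.range (lam i.val)).map fun c =>
      ⟨(((c : ℤ) - (i.val : ℤ) - 1) % ((2*n : ℕ) : ℤ)).toNat, by
        have hi := i.isLt
        have h2 : (0:ℤ) < ((2*n : ℕ) : ℤ) := by exact_mod_cast (show (0:ℕ) < 2*n by omega)
        have h3 := Int.emod_nonneg ((c : ℤ) - (i.val : ℤ) - 1) (ne_of_gt h2)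
        have h4 := Int.emod_lt_of_pos ((c : ℤ) - (i.val : ℤ) - 1) h2
        omega⟩

/-- The wheel polynomial `D_{π₁,π₂}` (with `π₁` of size `n₁`, `π₂` of size `n₂`):
starting from `D_{(π₁)_{n₂}}`, apply for each box of `λ(π₂)`, read row by row from top
to bottom and left to right, the operator `D` indexed (cyclically) by `c - i`. -/
noncomputable def DpiPair {F : Type*} [Field F] (q : F) (n1 n2 : ℕ)
    (D : Fin (2*(n1+n2)) → MvPolynomial (Fin (2*(n1+n2))) F → MvPolynomial (Fin (2*(n1+n2))) F)
    (f1 : Fin (2*n1) → Fin (2*n1)) (f2 : Fin (2*n2) → Fin (2*n2)) :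
    MvPolynomial (Fin (2*(n1+n2))) F :=
  (diagList2 (n1+n2) n2 (by omega) (lamRowF n2 f2)).foldl (fun p k => D k p)
    (DpiF q (n1+n2) D (nestF n1 n2 f1))

/-- `Psi` is the family `(Ψ_π)_{π ∈ NC_n}`: it starts with `Ψ_{()_n}` and satisfies the
recursion `Ψ_π = D_j(Ψ_σ) - Σ_{τ ∈ e_j⁻¹(σ), τ ∉ {σ,π}} Ψ_τ` whenever `σ ↗_j π`. -/
noncomputable def IsPsiFamily {F : Type*} [Field F] (q : F) (n : ℕ)
    (D : Fin (2*n) → MvPolynomial (Fin (2*n)) F → MvPolynomial (Fin (2*n)) F)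
    (Psi : NCM n → MvPolynomial (Fin (2*n)) F) : Prop :=
  Psi (nestedNC n) = PsiEmpty q n ∧
  ∀ (hn : 0 < n) (j : ℕ) (σ π : NCM n), UpArrow n σ.1 π.1 j →
    Psi π = D (finOfIdx (2*n) (by omega) j) (Psi σ) -
      ∑ τ : NCM n, if TLe (2*n) j τ.1 = σ.1 ∧ τ ≠ σ ∧ τ ≠ π then Psi τ else 0

/-! ### The polynomials `f(i,j)`, `g(i)`, `h(i)` and `P(α|β|γ)` -/

noncomputable def fP {F : Type*} [Field F] (q : F) {N : ℕ} (i j : Fin N) :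
    MvPolynomial (Fin N) F :=
  C (q - q⁻¹)⁻¹ * (C q * X i - C q⁻¹ * X j)

noncomputable def gP {F : Type*} [Field F] (q : F) {N : ℕ} (i : Fin N) :
    MvPolynomial (Fin N) F :=
  C (q - q⁻¹)⁻¹ * (C q - C q⁻¹ * X i)

noncomputable def hP {F : Type*} [Field F] (q : F) {N : ℕ} (i : Fin N) :
    MvPolynomial (Fin N) F :=
  C (q - q⁻¹)⁻¹ * (C q * X i - C q⁻¹)

noncomputable def Pabg {F : Type*} [Field F] (q : F) (n : ℕ)
    (α : Fin (2*n) → Fin (2*n) → ℕ) (β γ : Fin (2*n) → ℕ) :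
    MvPolynomial (Fin (2*n)) F :=
  (∏ i : Fin (2*n), ∏ j : Fin (2*n), if i ≠ j then fP q i j ^ α i j else 1) *
  ∏ i : Fin (2*n), (gP q i ^ β i * hP q i ^ γ i)

/-- The indeterminate `q` of `ℚ(q)`. -/
noncomputable def qQ : RatFunc ℚ := RatFunc.X

/-- `q = e^{2πi/3} ∈ ℂ`. -/
noncomputable def qC : ℂ := Complex.exp (2 * (Real.pi : ℂ) * Complex.I / 3)


lemma finset_filter_card_eq_sort (s : Finset ℕ) (p : ℕ → Prop) [DecidablePred p] :
    (s.filter p).card = ((s.sort (· ≤ ·)).filter (fun x => p x)).length := by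
  rw [Finset.card_def, Finset.filter_val, ← Multiset.countP_eq_card_filter, ← Finset.sort_eq s (· ≤ ·),
    Multiset.coe_countP, List.countP_eq_length_filter]

-- strictly sorted list: entries ≥ index
lemma sorted_le_getD (l : List ℕ) (hl : l.Pairwise (· < ·)) :
    ∀ t, t < l.length → t ≤ l.getD t 0 := by
  have hg := List.pairwise_iff_getElem.mp hl
  intro t
  induction t with
  | zero => intro _; exact Nat.zero_le _
  | succ k ih =>
    intro ht
    have hk : k < l.length := by omega
    have h1 := ih hk
    have h2 : l[k] < l[k+1] := hg k (k+1) hk ht (by omega)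
    rw [List.getD_eq_getElem l 0 hk] at h1
    rw [List.getD_eq_getElem l 0 ht]
    omega

-- filter below the s-th entry of a strictly sorted list
lemma sorted_filter_lt (l : List ℕ) (hl : l.Pairwise (· < ·)) (s : ℕ) (hs : s < l.length) :
    (l.filter (fun x => x < l[s])).length = s := by
  have hg := List.pairwise_iff_getElem.mp hl
  have hsplit : l = l.take s ++ l.drop s := (List.take_append_drop s l).symm
  have h1 : (l.take s).filter (fun x => x < l[s]) = l.take s := by
    apply List.filter_eq_self.mpr
    intro x hx
    rw [List.mem_iff_getElem] at hx
    obtain ⟨t, ht, rfl⟩ := hx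
    have htl : t < l.length := by
      have := List.length_take (i := s) (l := l); omega
    have : (l.take s)[t] = l[t] := List.getElem_take (xs := l)
    rw [this]
    simp only [decide_eq_true_eq]
    exact hg t s htl hs (by simp [List.length_take] at ht; omega)
  have h2 : (l.drop s).filter (fun x => x < l[s]) = [] := by
    apply List.filter_eq_nil_iff.mpr
    intro x hx
    rw [List.mem_iff_getElem] at hx
    obtain ⟨t, ht, rfl⟩ := hx
    have htl : s + t < l.length := by simp at ht; omega
    have : (l.drop s)[t] = l[s+t] := List.getElem_drop (xs := l)
    rw [this]
    simp only [decide_eq_true_eq, not_lt]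
    rcases Nat.eq_zero_or_pos t with h | h
    · subst h; simp
    · exact le_of_lt (hg s (s+t) hs htl (by omega))
  calc (l.filter (fun x => x < l[s])).length
      = ((l.take s ++ l.drop s).filter (fun x => x < l[s])).length := by rw [← hsplit]
    _ = s := by rw [List.filter_append, h1, h2]; simp [List.length_take]; omega

lemma card_filter_val_lt (m p : ℕ) (hp : p ≤ m) :
    (Finset.univ.filter fun x : Fin m => x.val < p).card = p := by
  have h : ∀ q ∈ Finset.range p, q < m := by intro q hq; simp at hq; omega
  have : (Finset.univ.filter fun x : Fin m => x.val < p) = (Finset.range p).attachFin h := by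
    ext x
    simp [Finset.mem_attachFin]
  rw [this, Finset.card_attachFin, Finset.card_range]

lemma lefts_split {m : ℕ} (f : Fin m → Fin m) (hfix : ∀ x, f x ≠ x) (p : ℕ) (hp : p ≤ m) :
    (Finset.univ.filter fun x : Fin m => x.val < p ∧ x < f x).card +
    (Finset.univ.filter fun x : Fin m => x.val < p ∧ f x < x).card = p := by
  classical
  have h := Finset.card_filter_add_card_filter_not
    (s := Finset.univ.filter fun x : Fin m => x.val < p) (p := fun x => x < f x)
  rw [Finset.filter_filter, Finset.filter_filter] at h
  rw [card_filter_val_lt m p hp] at h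
  have e : (Finset.univ.filter fun x : Fin m => x.val < p ∧ ¬ x < f x) =
      (Finset.univ.filter fun x : Fin m => x.val < p ∧ f x < x) := by
    apply Finset.filter_congr
    intro x _
    constructor
    · rintro ⟨h1, h2⟩; exact ⟨h1, lt_of_le_of_ne (not_lt.mp h2) (hfix x)⟩
    · rintro ⟨h1, h2⟩; exact ⟨h1, not_lt.mpr (le_of_lt h2)⟩
  rw [e] at h
  convert h using 3 <;> exact Finset.filter_congr (fun x _ => Iff.rfl)

lemma rights_le_lefts {m : ℕ} (f : Fin m → Fin m) (hinv : ∀ x, f (f x) = x) (p : ℕ) :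
    (Finset.univ.filter fun x : Fin m => x.val < p ∧ f x < x).card ≤
    (Finset.univ.filter fun x : Fin m => x.val < p ∧ x < f x).card := by
  apply Finset.card_le_card_of_injOn f
  · intro x hx
    simp only [Finset.mem_coe, Finset.mem_filter, Finset.mem_univ, true_and] at hx ⊢
    refine ⟨?_, ?_⟩
    · have : (f x).val < x.val := hx.2
      omega
    · rw [hinv x]; exact hx.2
  · intro x _ y _ hxy
    have := congrArg f hxy
    rwa [hinv, hinv] at this

lemma lefts_le_rights {m : ℕ} (f : Fin m → Fin m) (hinv : ∀ x, f (f x) = x) (p : ℕ)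
    (hcl : ∀ x : Fin m, x.val < p → (f x).val < p) :
    (Finset.univ.filter fun x : Fin m => x.val < p ∧ x < f x).card ≤
    (Finset.univ.filter fun x : Fin m => x.val < p ∧ f x < x).card := by
  apply Finset.card_le_card_of_injOn f
  · intro x hx
    simp only [Finset.mem_coe, Finset.mem_filter, Finset.mem_univ, true_and] at hx ⊢
    refine ⟨hcl x hx.1, ?_⟩
    rw [hinv x]; exact hx.2
  · intro x _ y _ hxy
    have := congrArg f hxy
    rwa [hinv, hinv] at this

lemma ballot {m : ℕ} (f : Fin m → Fin m) (hinv : ∀ x, f (f x) = x)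
    (hfix : ∀ x, f x ≠ x) (p : ℕ) (hp : p ≤ m) :
    p ≤ 2 * (Finset.univ.filter fun x : Fin m => x.val < p ∧ x < f x).card := by
  have h1 := lefts_split f hfix p hp
  have h2 := rights_le_lefts f hinv p
  omega

lemma closed_count {m : ℕ} (f : Fin m → Fin m) (hinv : ∀ x, f (f x) = x)
    (hfix : ∀ x, f x ≠ x) (p : ℕ) (hp : p ≤ m)
    (hcl : ∀ x : Fin m, x.val < p → (f x).val < p) :
    2 * (Finset.univ.filter fun x : Fin m => x.val < p ∧ x < f x).card = p := by
  have h1 := lefts_split f hfix p hp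
  have h2 := rights_le_lefts f hinv p
  have h3 := lefts_le_rights f hinv p hcl
  omega

lemma leftset_card (n : ℕ) (f : Fin (2*n) → Fin (2*n)) (hinv : ∀ x, f (f x) = x)
    (hfix : ∀ x, f x ≠ x) :
    (Finset.univ.filter fun j : Fin (2*n) => j < f j).card = n := by
  have h := closed_count f hinv hfix (2*n) (le_refl _) (fun x _ => (f x).isLt)
  have e : (Finset.univ.filter fun x : Fin (2*n) => x.val < 2*n ∧ x < f x) =
      (Finset.univ.filter fun j : Fin (2*n) => j < f j) := by
    apply Finset.filter_congr
    intro x _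
    simp [x.isLt]
  rw [e] at h
  omega

/-! Auxiliary: the sorted list of values of left endpoints. -/

lemma finset_filter_card_eq_sort' {k : ℕ} (s : Finset (Fin k))
    (p : Fin k → Prop) [DecidablePred p] :
    (s.filter p).card = ((s.sort (· ≤ ·)).filter (fun x => p x)).length := by
  rw [Finset.card_def, Finset.filter_val, ← Multiset.countP_eq_card_filter,
    ← Finset.sort_eq s (· ≤ ·), Multiset.coe_countP, List.countP_eq_length_filter]

noncomputable def lvals (n : ℕ) (f : Fin (2*n) → Fin (2*n)) : List ℕ :=
  ((Finset.univ.filter fun j : Fin (2*n) => j < f j).sort (· ≤ ·)).map Fin.val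

lemma lamRowF_eq_lvals (n : ℕ) (f : Fin (2*n) → Fin (2*n)) (r : ℕ) (hr : r < n) :
    lamRowF n f r = (lvals n f).getD (n - 1 - r) 0 - (n - 1 - r) := by
  rw [lamRowF, if_pos hr]; rfl

lemma lvals_length (n : ℕ) (f : Fin (2*n) → Fin (2*n)) (hinv : ∀ x, f (f x) = x)
    (hfix : ∀ x, f x ≠ x) : (lvals n f).length = n := by
  rw [lvals, List.length_map, Finset.length_sort, leftset_card n f hinv hfix]

lemma lvals_sorted (n : ℕ) (f : Fin (2*n) → Fin (2*n)) :
    (lvals n f).Pairwise (· < ·) := by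
  rw [lvals]
  exact List.Pairwise.map Fin.val (fun a b h => h) (Finset.sortedLT_sort _).pairwise

lemma lvals_count (n : ℕ) (f : Fin (2*n) → Fin (2*n)) (c : ℕ) :
    (Finset.univ.filter fun x : Fin (2*n) => x.val < c ∧ x < f x).card =
      ((lvals n f).filter (fun x => x < c)).length := by
  classical
  have e1 : (Finset.univ.filter fun x : Fin (2*n) => x.val < c ∧ x < f x) =
      ((Finset.univ.filter fun j : Fin (2*n) => j < f j).filter fun x => x.val < c) := by
    rw [Finset.filter_filter]
    apply Finset.filter_congr
    intro x _
    tauto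
  rw [e1, finset_filter_card_eq_sort', lvals, List.filter_map, List.length_map]
  rfl

/-- Key combinatorial lemma: if a box can be added to `λ(β)` on diagonal `i`, then it is
impossible that `β` has the arch `(i-1, i)` (0-indexed) and `β` preserves `{0, …, i-2}`. -/
lemma keyK (n' : ℕ) (β γ : Fin (2*n') → Fin (2*n')) (hβ : IsNCMatching n' β)
    (hγ : IsNCMatching n' γ) (i : ℕ) (hi1 : 2 ≤ i) (hi2 : i ≤ 2*n' - 2)
    (hup : UpArrow n' β γ i)
    (hclosed : ∀ y : Fin (2*n'), y.val < i - 1 → (β y).val < i - 1) : False := by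
  obtain ⟨hinvβ, hfixβ, -⟩ := hβ
  obtain ⟨hinvγ, hfixγ, -⟩ := hγ
  have hn : 2 ≤ n' := by omega
  obtain ⟨r₀, hr₀, heq, hoth, hdiag⟩ := hup
  set v := lvals n' β with hv
  set w := lvals n' γ with hw
  have lenv : v.length = n' := lvals_length n' β hinvβ hfixβ
  have lenw : w.length = n' := lvals_length n' γ hinvγ hfixγ
  have sortv : v.Pairwise (· < ·) := lvals_sorted n' β
  have sortw : w.Pairwise (· < ·) := lvals_sorted n' γ
  have gev : ∀ t, t < n' → t ≤ v.getD t 0 := fun t ht =>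
    sorted_le_getD v sortv t (by omega)
  have gew : ∀ t, t < n' → t ≤ w.getD t 0 := fun t ht =>
    sorted_le_getD w sortw t (by omega)
  set s := n' - 1 - r₀ with hsdef
  have hs : s < n' := by omega
  have hr0s : r₀ = n' - 1 - s := by omega
  -- the s-th entries
  have hvs : v.getD s 0 = i - 1 := by
    rw [lamRowF_eq_lvals n' β r₀ hr₀, ← hv, ← hsdef] at hdiag
    have h1 := gev s hs
    omega
  have hws : w.getD s 0 = i := by
    rw [lamRowF_eq_lvals n' β r₀ hr₀, lamRowF_eq_lvals n' γ r₀ hr₀, ← hv, ← hw, ← hsdef] at heq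
    have h1 := gev s hs
    have h2 := gew s hs
    omega
  have hwt : ∀ t, t < n' → t ≠ s → w.getD t 0 = v.getD t 0 := by
    intro t ht hts
    have hr : n' - 1 - t < n' := by omega
    have hrr : n' - 1 - t ≠ r₀ := by omega
    have h := hoth (n' - 1 - t) hrr
    rw [lamRowF_eq_lvals n' β _ hr, lamRowF_eq_lvals n' γ _ hr, ← hv, ← hw] at h
    have e : n' - 1 - (n' - 1 - t) = t := by omega
    rw [e] at h
    have h1 := gev t ht
    have h2 := gew t ht
    omega
  -- counting left endpoints of β below i-1
  have cβ : ((v.filter (fun x => x < i - 1))).length = s := by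
    have := sorted_filter_lt v sortv s (by omega)
    rw [List.getD_eq_getElem v 0 (by omega)] at hvs
    rw [hvs] at this
    exact this
  have cβ' : (Finset.univ.filter fun x : Fin (2*n') => x.val < i - 1 ∧ x < β x).card = s := by
    rw [lvals_count n' β (i-1), ← hv, cβ]
  have hclosedβ := closed_count β hinvβ hfixβ (i-1) (by omega) hclosed
  rw [cβ'] at hclosedβ
  -- counting left endpoints of γ below i
  have cγ : ((w.filter (fun x => x < i))).length = s := by
    have := sorted_filter_lt w sortw s (by omega)
    rw [List.getD_eq_getElem w 0 (by omega)] at hws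
    rw [hws] at this
    exact this
  have cγ' : (Finset.univ.filter fun x : Fin (2*n') => x.val < i ∧ x < γ x).card = s := by
    rw [lvals_count n' γ i, ← hw, cγ]
  have hbal := ballot γ hinvγ hfixγ i (by omega)
  rw [cγ'] at hbal
  omega

lemma TLe_apply (m j : ℕ) (f : Fin m → Fin m) (x a b : Fin m)
    (ha : a.val = (j-1) % m) (hb : b.val = j % m) :
    TLe m j f x = if x = a then b else if x = b then a
      else if f x = a then f b else if f x = b then f a else f x := by
  have e1 : (⟨(j-1) % m, Nat.mod_lt _ x.pos⟩ : Fin m) = a := Fin.ext ha.symm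
  have e2 : (⟨j % m, Nat.mod_lt _ x.pos⟩ : Fin m) = b := Fin.ext hb.symm
  simp only [TLe, e1, e2]

lemma concat_lo {n n' : ℕ} (f : Fin (2*n) → Fin (2*n)) (g : Fin (2*n') → Fin (2*n'))
    (x : Fin (2*(n+n'))) (y : Fin (2*n)) (hxy : x.val = y.val) :
    concatF n n' f g x = ⟨(f y).val, by have := (f y).isLt; omega⟩ := by
  have hlt : x.val < 2*n := by rw [hxy]; exact y.isLt
  simp only [concatF, dif_pos hlt]
  have e : (⟨x.val, hlt⟩ : Fin (2*n)) = y := Fin.ext hxy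
  apply Fin.ext
  show (f ⟨x.val, hlt⟩).val = (f y).val
  exact congrArg (fun z => (f z).val) e

lemma concat_hi {n n' : ℕ} (f : Fin (2*n) → Fin (2*n)) (g : Fin (2*n') → Fin (2*n'))
    (x : Fin (2*(n+n'))) (y : Fin (2*n')) (hxy : x.val = 2*n + y.val) :
    concatF n n' f g x = ⟨2*n + (g y).val, by have := (g y).isLt; omega⟩ := by
  have hlt : ¬ x.val < 2*n := by omega
  simp only [concatF, dif_neg hlt]
  have e : (⟨x.val - 2*n, by have := x.isLt; omega⟩ : Fin (2*n')) = y :=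
    Fin.ext (by show x.val - 2*n = y.val; omega)
  apply Fin.ext
  show 2*n + (g ⟨x.val - 2*n, by have := x.isLt; omega⟩).val = 2*n + (g y).val
  exact congrArg (fun z => 2*n + (g z).val) e

lemma split_matching (n n' : ℕ) (σ : NCM (n+n')) (g : Fin (2*n) → Fin (2*n))
    (hbl : ∀ x : Fin (2*(n+n')), 2*n ≤ x.val → 2*n ≤ (σ.1 x).val)
    (hlow : ∀ (x : Fin (2*(n+n'))) (hx : x.val < 2*n), (σ.1 x).val = (g ⟨x.val, hx⟩).val) :
    ∃ τ : NCM n', σ.1 = concatF n n' g τ.1 ∧ ∀ y : Fin (2*n'),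
      (σ.1 ⟨2*n + y.val, by have := y.isLt; omega⟩).val = 2*n + (τ.1 y).val := by
  obtain ⟨hsinv, hsfix, hsnc⟩ := σ.2
  have hy1 : ∀ y : Fin (2*n'), 2*n + y.val < 2*(n+n') := fun y => by have := y.isLt; omega
  have hy2 : ∀ y : Fin (2*n'), (σ.1 ⟨2*n + y.val, hy1 y⟩).val - 2*n < 2*n' := fun y => by
    have h1 := (σ.1 ⟨2*n + y.val, hy1 y⟩).isLt
    have h2 := hbl ⟨2*n + y.val, hy1 y⟩ (by show 2*n ≤ 2*n + y.val; omega)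
    have h3 := y.isLt
    omega
  have hval : ∀ y : Fin (2*n'),
      (σ.1 ⟨2*n + y.val, hy1 y⟩).val = 2*n + ((σ.1 ⟨2*n + y.val, hy1 y⟩).val - 2*n) := by
    intro y
    have := hbl ⟨2*n + y.val, hy1 y⟩ (by show 2*n ≤ 2*n + y.val; omega)
    omega
  refine ⟨⟨fun y => ⟨(σ.1 ⟨2*n + y.val, hy1 y⟩).val - 2*n, hy2 y⟩, ?_, ?_, ?_⟩, ?_, ?_⟩
  · -- involution
    intro y
    apply Fin.ext
    show (σ.1 ⟨2*n + ((σ.1 ⟨2*n + y.val, hy1 y⟩).val - 2*n), _⟩).val - 2*n = y.val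
    have e : (⟨2*n + ((σ.1 ⟨2*n + y.val, hy1 y⟩).val - 2*n),
        by have := (σ.1 ⟨2*n + y.val, hy1 y⟩).isLt; have := hy2 y; omega⟩ : Fin (2*(n+n'))) =
        σ.1 ⟨2*n + y.val, hy1 y⟩ := Fin.ext (hval y).symm
    rw [e, hsinv]
    show 2*n + y.val - 2*n = y.val
    omega
  · -- fixed point free
    intro y hy
    have hv : (σ.1 ⟨2*n + y.val, hy1 y⟩).val - 2*n = y.val := congrArg Fin.val hy
    have : σ.1 ⟨2*n + y.val, hy1 y⟩ = ⟨2*n + y.val, hy1 y⟩ := by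
      apply Fin.ext
      show (σ.1 ⟨2*n + y.val, hy1 y⟩).val = 2*n + y.val
      have := hval y
      omega
    exact hsfix _ this
  · -- noncrossing
    intro y1 y2 h1 h2 h3
    rw [Fin.lt_def] at h1 h2 h3
    apply hsnc ⟨2*n + y1.val, hy1 y1⟩ ⟨2*n + y2.val, hy1 y2⟩
    · rw [Fin.lt_def]
      show 2*n + y1.val < 2*n + y2.val
      omega
    · rw [Fin.lt_def]
      have := hval y1
      show 2*n + y2.val < (σ.1 ⟨2*n + y1.val, hy1 y1⟩).val
      have h2' : y2.val < (σ.1 ⟨2*n + y1.val, hy1 y1⟩).val - 2*n := h2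
      omega
    · rw [Fin.lt_def]
      have e1 := hval y1
      have e2 := hval y2
      have h3' : (σ.1 ⟨2*n + y1.val, hy1 y1⟩).val - 2*n <
          (σ.1 ⟨2*n + y2.val, hy1 y2⟩).val - 2*n := h3
      omega
  · -- σ = concat
    funext x
    by_cases hx : x.val < 2*n
    · rw [concat_lo g _ x ⟨x.val, hx⟩ rfl]
      exact Fin.ext (hlow x hx)
    · have hxv := x.isLt
      rw [concat_hi g _ x ⟨x.val - 2*n, by omega⟩ (by show x.val = 2*n + (x.val - 2*n); omega)]
      apply Fin.ext
      show (σ.1 x).val = 2*n + ((σ.1 ⟨2*n + (x.val - 2*n), by omega⟩).val - 2*n)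
      have ex : (⟨2*n + (x.val - 2*n), by omega⟩ : Fin (2*(n+n'))) = x :=
        Fin.ext (by show 2*n + (x.val - 2*n) = x.val; omega)
      rw [ex]
      have := hbl x (by omega)
      omega
  · exact hval

lemma bwd_dir (n n' : ℕ) (α : NCM n) (β : NCM n') (i : ℕ)
    (hi1 : 2 ≤ i) (hi2 : i ≤ 2*n' - 2) (σ : NCM (n + n')) (τ : NCM n')
    (hτ : TLe (2*n') i τ.1 = β.1) (hσ : σ.1 = concatF n n' α.1 τ.1) :
    TLe (2*(n+n')) (2*n + i) σ.1 = concatF n n' α.1 β.1 := by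
  have hn' : 2 ≤ n' := by omega
  have hA : 2*n+i-1 < 2*(n+n') := by omega
  have hB : 2*n+i < 2*(n+n') := by omega
  have hin1 : i-1 < 2*n' := by omega
  have hin2 : i < 2*n' := by omega
  have hτpt : ∀ y : Fin (2*n'), (if y = ⟨i-1, hin1⟩ then (⟨i, hin2⟩ : Fin (2*n'))
      else if y = ⟨i, hin2⟩ then ⟨i-1, hin1⟩
      else if τ.1 y = ⟨i-1, hin1⟩ then τ.1 ⟨i, hin2⟩
      else if τ.1 y = ⟨i, hin2⟩ then τ.1 ⟨i-1, hin1⟩ else τ.1 y) = β.1 y := by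
    intro y
    rw [← TLe_apply (2*n') i τ.1 y ⟨i-1, hin1⟩ ⟨i, hin2⟩
      (by show i-1 = (i-1) % (2*n'); rw [Nat.mod_eq_of_lt hin1])
      (by show i = i % (2*n'); rw [Nat.mod_eq_of_lt hin2])]
    exact congrFun hτ y
  have hne' : (⟨i-1, hin1⟩ : Fin (2*n')) ≠ ⟨i, hin2⟩ := by
    intro h
    have hv : i - 1 = i := congrArg Fin.val h
    omega
  have hβ1 : β.1 ⟨i-1, hin1⟩ = ⟨i, hin2⟩ := by
    have h0 := hτpt ⟨i-1, hin1⟩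
    rw [if_pos rfl] at h0
    exact h0.symm
  have hβ2 : β.1 ⟨i, hin2⟩ = ⟨i-1, hin1⟩ := by
    have h0 := hτpt ⟨i, hin2⟩
    rw [if_neg (fun h => hne' h.symm), if_pos rfl] at h0
    exact h0.symm
  funext x
  rw [TLe_apply (2*(n+n')) (2*n+i) σ.1 x ⟨2*n+i-1, hA⟩ ⟨2*n+i, hB⟩
    (by show 2*n+i-1 = (2*n+i-1) % (2*(n+n')); rw [Nat.mod_eq_of_lt hA])
    (by show 2*n+i = (2*n+i) % (2*(n+n')); rw [Nat.mod_eq_of_lt hB]), hσ]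
  by_cases hxa : x = ⟨2*n+i-1, hA⟩
  · rw [if_pos hxa, hxa,
      concat_hi α.1 β.1 _ ⟨i-1, hin1⟩ (by show 2*n+i-1 = 2*n + (i-1); omega)]
    exact Fin.ext (by simp [hβ1])
  rw [if_neg hxa]
  by_cases hxb : x = ⟨2*n+i, hB⟩
  · rw [if_pos hxb, hxb,
      concat_hi α.1 β.1 _ ⟨i, hin2⟩ (by show 2*n+i = 2*n + i; rfl)]
    simp only [hβ2]
    exact Fin.ext (by show 2*n+i-1 = 2*n + (i-1); omega)
  rw [if_neg hxb]
  by_cases hx : x.val < 2*n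
  · have hfx := concat_lo α.1 τ.1 x ⟨x.val, hx⟩ rfl
    have hα := (α.1 ⟨x.val, hx⟩).isLt
    have h1 : concatF n n' α.1 τ.1 x ≠ ⟨2*n+i-1, hA⟩ := by
      intro h
      rw [hfx] at h
      have hv : (α.1 ⟨x.val, hx⟩).val = 2*n+i-1 := congrArg Fin.val h
      omega
    have h2 : concatF n n' α.1 τ.1 x ≠ ⟨2*n+i, hB⟩ := by
      intro h
      rw [hfx] at h
      have hv : (α.1 ⟨x.val, hx⟩).val = 2*n+i := congrArg Fin.val h
      omega
    rw [if_neg h1, if_neg h2, hfx, concat_lo α.1 β.1 x ⟨x.val, hx⟩ rfl]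
  · -- x in the right block
    have hxlt := x.isLt
    set y : Fin (2*n') := ⟨x.val - 2*n, by omega⟩ with hydef
    have hyv : y.val = x.val - 2*n := rfl
    have hxy : x.val = 2*n + y.val := by rw [hyv]; omega
    have hfx := concat_hi α.1 τ.1 x y hxy
    have hy1 : y ≠ ⟨i-1, hin1⟩ := by
      intro h
      apply hxa
      have hv : y.val = i-1 := congrArg Fin.val h
      exact Fin.ext (by show x.val = 2*n+i-1; omega)
    have hy2 : y ≠ ⟨i, hin2⟩ := by
      intro h
      apply hxb
      have hv : y.val = i := congrArg Fin.val h
      exact Fin.ext (by show x.val = 2*n+i; omega)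
    have hβy := hτpt y
    rw [if_neg hy1, if_neg hy2] at hβy
    rw [concat_hi α.1 β.1 x y hxy]
    by_cases ht1 : τ.1 y = ⟨i-1, hin1⟩
    · rw [if_pos ht1] at hβy
      have hfa : concatF n n' α.1 τ.1 x = ⟨2*n+i-1, hA⟩ := by
        rw [hfx]
        have hv : (τ.1 y).val = i-1 := congrArg Fin.val ht1
        exact Fin.ext (by show 2*n + (τ.1 y).val = 2*n+i-1; omega)
      rw [if_pos hfa,
        concat_hi α.1 τ.1 (⟨2*n+i, hB⟩ : Fin (2*(n+n'))) ⟨i, hin2⟩ (by show 2*n+i = 2*n+i; rfl)]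
      simp only [hβy]
    · rw [if_neg ht1] at hβy
      have hfa : concatF n n' α.1 τ.1 x ≠ ⟨2*n+i-1, hA⟩ := by
        intro h
        apply ht1
        rw [hfx] at h
        have hv : 2*n + (τ.1 y).val = 2*n+i-1 := congrArg Fin.val h
        exact Fin.ext (by show (τ.1 y).val = i-1; omega)
      rw [if_neg hfa]
      by_cases ht2 : τ.1 y = ⟨i, hin2⟩
      · rw [if_pos ht2] at hβy
        have hfb : concatF n n' α.1 τ.1 x = ⟨2*n+i, hB⟩ := by
          rw [hfx]
          have hv : (τ.1 y).val = i := congrArg Fin.val ht2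
          exact Fin.ext (by show 2*n + (τ.1 y).val = 2*n+i; omega)
        rw [if_pos hfb,
          concat_hi α.1 τ.1 (⟨2*n+i-1, hA⟩ : Fin (2*(n+n'))) ⟨i-1, hin1⟩
            (by show 2*n+i-1 = 2*n+(i-1); omega)]
        simp only [hβy]
      · rw [if_neg ht2] at hβy
        have hfb : concatF n n' α.1 τ.1 x ≠ ⟨2*n+i, hB⟩ := by
          intro h
          apply ht2
          rw [hfx] at h
          have hv : 2*n + (τ.1 y).val = 2*n+i := congrArg Fin.val h
          exact Fin.ext (by show (τ.1 y).val = i; omega)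
        rw [if_neg hfb, hfx]
        simp only [hβy]

set_option maxHeartbeats 2000000 in
lemma fwd_dir (n n' : ℕ) (α : NCM n) (β γ : NCM n') (i : ℕ)
    (hi1 : 2 ≤ i) (hi2 : i ≤ 2*n' - 2) (hup : UpArrow n' β.1 γ.1 i)
    (σ : NCM (n + n'))
    (h : TLe (2*(n+n')) (2*n + i) σ.1 = concatF n n' α.1 β.1) :
    ∃ τ : NCM n', TLe (2*n') i τ.1 = β.1 ∧ σ.1 = concatF n n' α.1 τ.1 := by
  have hn' : 2 ≤ n' := by omega
  have hA : 2*n+i-1 < 2*(n+n') := by omega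
  have hB : 2*n+i < 2*(n+n') := by omega
  have hin1 : i-1 < 2*n' := by omega
  have hin2 : i < 2*n' := by omega
  obtain ⟨hsinv, hsfix, hsnc⟩ := σ.2
  have hbinv := β.2.1
  have hpt : ∀ x : Fin (2*(n+n')),
      (if x = ⟨2*n+i-1, hA⟩ then (⟨2*n+i, hB⟩ : Fin (2*(n+n')))
      else if x = ⟨2*n+i, hB⟩ then ⟨2*n+i-1, hA⟩
      else if σ.1 x = ⟨2*n+i-1, hA⟩ then σ.1 ⟨2*n+i, hB⟩
      else if σ.1 x = ⟨2*n+i, hB⟩ then σ.1 ⟨2*n+i-1, hA⟩ else σ.1 x) =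
      concatF n n' α.1 β.1 x := by
    intro x
    rw [← TLe_apply (2*(n+n')) (2*n+i) σ.1 x ⟨2*n+i-1, hA⟩ ⟨2*n+i, hB⟩
      (by show 2*n+i-1 = (2*n+i-1) % (2*(n+n')); rw [Nat.mod_eq_of_lt hA])
      (by show 2*n+i = (2*n+i) % (2*(n+n')); rw [Nat.mod_eq_of_lt hB])]
    exact congrFun h x
  -- β has the arch (i-1, i)
  have hβ1 : β.1 ⟨i-1, hin1⟩ = ⟨i, hin2⟩ := by
    have h0 := hpt ⟨2*n+i-1, hA⟩
    rw [if_pos rfl,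
      concat_hi α.1 β.1 _ ⟨i-1, hin1⟩ (by show 2*n+i-1 = 2*n + (i-1); omega)] at h0
    have hv : 2*n+i = 2*n + (β.1 ⟨i-1, hin1⟩).val := congrArg Fin.val h0
    exact Fin.ext (show (β.1 ⟨i-1, hin1⟩).val = i by omega)
  have hβ2 : β.1 ⟨i, hin2⟩ = ⟨i-1, hin1⟩ := by
    have h2 := congrArg β.1 hβ1
    rw [hbinv] at h2
    exact h2.symm
  by_cases hp : (σ.1 ⟨2*n+i-1, hA⟩).val < 2*n
  · -- impossible case, by the key combinatorial lemma
    exfalso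
    apply keyK n' β.1 γ.1 β.2 γ.2 i hi1 hi2 hup
    intro y hy
    have hyI := y.isLt
    obtain ⟨x, hxv⟩ : ∃ x : Fin (2*(n+n')), x.val = 2*n + y.val :=
      ⟨⟨2*n + y.val, by omega⟩, rfl⟩
    have hxa : x ≠ ⟨2*n+i-1, hA⟩ := by
      intro he
      have hv : x.val = 2*n+i-1 := congrArg Fin.val he
      omega
    have hxb : x ≠ ⟨2*n+i, hB⟩ := by
      intro he
      have hv : x.val = 2*n+i := congrArg Fin.val he
      omega
    have hfxa : σ.1 x ≠ ⟨2*n+i-1, hA⟩ := by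
      intro he
      have h2 := congrArg σ.1 he
      rw [hsinv] at h2
      have hv : x.val = (σ.1 ⟨2*n+i-1, hA⟩).val := congrArg Fin.val h2
      omega
    have h1 := hpt x
    rw [if_neg hxa, if_neg hxb, if_neg hfxa, concat_hi α.1 β.1 x y hxv] at h1
    by_cases hfxb : σ.1 x = ⟨2*n+i, hB⟩
    · rw [if_pos hfxb] at h1
      have hv : (σ.1 ⟨2*n+i-1, hA⟩).val = 2*n + (β.1 y).val := congrArg Fin.val h1
      omega
    · rw [if_neg hfxb] at h1
      by_contra hge
      have hne1 : (β.1 y).val ≠ i-1 := by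
        intro he
        have h2 := congrArg β.1 (Fin.ext he : β.1 y = ⟨i-1, hin1⟩)
        rw [hbinv, hβ1] at h2
        have hv : y.val = i := congrArg Fin.val h2
        omega
      have hne2 : (β.1 y).val ≠ i := by
        intro he
        have h2 := congrArg β.1 (Fin.ext he : β.1 y = ⟨i, hin2⟩)
        rw [hbinv, hβ2] at h2
        have hv : y.val = i-1 := congrArg Fin.val h2
        omega
      have hvb : (σ.1 x).val = 2*n + (β.1 y).val := congrArg Fin.val h1
      refine hsnc (σ.1 ⟨2*n+i-1, hA⟩) x ?_ ?_ ?_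
      · rw [Fin.lt_def]
        show (σ.1 ⟨2*n+i-1, hA⟩).val < x.val
        omega
      · rw [hsinv, Fin.lt_def]
        show x.val < 2*n+i-1
        omega
      · rw [hsinv, Fin.lt_def]
        show 2*n+i-1 < (σ.1 x).val
        omega
  · -- the generic case: σ respects the two blocks
    have hfbge : 2*n ≤ (σ.1 ⟨2*n+i, hB⟩).val := by
      by_cases hab : σ.1 ⟨2*n+i-1, hA⟩ = ⟨2*n+i, hB⟩
      · have h2 := congrArg σ.1 hab
        rw [hsinv] at h2
        have hv : 2*n+i-1 = (σ.1 ⟨2*n+i, hB⟩).val := congrArg Fin.val h2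
        omega
      · have hpa : σ.1 ⟨2*n+i-1, hA⟩ ≠ ⟨2*n+i-1, hA⟩ := hsfix _
        have hfp : σ.1 (σ.1 ⟨2*n+i-1, hA⟩) = ⟨2*n+i-1, hA⟩ := hsinv _
        have h1 := hpt (σ.1 ⟨2*n+i-1, hA⟩)
        rw [if_neg hpa, if_neg hab, if_pos hfp] at h1
        have hpge : 2*n ≤ (σ.1 ⟨2*n+i-1, hA⟩).val := not_lt.mp hp
        have hplt := (σ.1 ⟨2*n+i-1, hA⟩).isLt
        rw [concat_hi α.1 β.1 _ ⟨(σ.1 ⟨2*n+i-1, hA⟩).val - 2*n, by omega⟩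
          (by show (σ.1 ⟨2*n+i-1, hA⟩).val = 2*n + ((σ.1 ⟨2*n+i-1, hA⟩).val - 2*n); omega)] at h1
        have hv := congrArg Fin.val h1
        have hv2 : (σ.1 ⟨2*n+i, hB⟩).val = 2*n + (β.1 _).val := hv
        omega
    have hblock : ∀ x : Fin (2*(n+n')), 2*n ≤ x.val → 2*n ≤ (σ.1 x).val := by
      intro x hx
      by_cases hxa : x = ⟨2*n+i-1, hA⟩
      · rw [hxa]; exact not_lt.mp hp
      by_cases hxb : x = ⟨2*n+i, hB⟩
      · rw [hxb]; exact hfbge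
      by_cases hfa : σ.1 x = ⟨2*n+i-1, hA⟩
      · rw [hfa]; show 2*n ≤ 2*n+i-1; omega
      by_cases hfb : σ.1 x = ⟨2*n+i, hB⟩
      · rw [hfb]; show 2*n ≤ 2*n+i; omega
      · have h1 := hpt x
        rw [if_neg hxa, if_neg hxb, if_neg hfa, if_neg hfb] at h1
        have hxlt := x.isLt
        rw [concat_hi α.1 β.1 x ⟨x.val - 2*n, by omega⟩
          (by show x.val = 2*n + (x.val - 2*n); omega)] at h1
        have hv : (σ.1 x).val = 2*n + (β.1 _).val := congrArg Fin.val h1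
        omega
    have hlow : ∀ (x : Fin (2*(n+n'))) (hx : x.val < 2*n),
        (σ.1 x).val = (α.1 ⟨x.val, hx⟩).val := by
      intro x hx
      have hxa : x ≠ ⟨2*n+i-1, hA⟩ := by
        intro he
        have hv : x.val = 2*n+i-1 := congrArg Fin.val he
        omega
      have hxb : x ≠ ⟨2*n+i, hB⟩ := by
        intro he
        have hv : x.val = 2*n+i := congrArg Fin.val he
        omega
      have hfa : σ.1 x ≠ ⟨2*n+i-1, hA⟩ := by
        intro he
        have h2 := congrArg σ.1 he
        rw [hsinv] at h2
        have hv : x.val = (σ.1 ⟨2*n+i-1, hA⟩).val := congrArg Fin.val h2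
        have := not_lt.mp hp
        omega
      have hfb : σ.1 x ≠ ⟨2*n+i, hB⟩ := by
        intro he
        have h2 := congrArg σ.1 he
        rw [hsinv] at h2
        have hv : x.val = (σ.1 ⟨2*n+i, hB⟩).val := congrArg Fin.val h2
        omega
      have h1 := hpt x
      rw [if_neg hxa, if_neg hxb, if_neg hfa, if_neg hfb,
        concat_lo α.1 β.1 x ⟨x.val, hx⟩ rfl] at h1
      exact congrArg Fin.val h1
    obtain ⟨τ, hστ, -⟩ := split_matching n n' σ α.1 hblock hlow
    refine ⟨τ, ?_, hστ⟩
    -- values of σ on the right block via the concatenation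
    have hσA : σ.1 ⟨2*n+i-1, hA⟩ =
        ⟨2*n + (τ.1 ⟨i-1, hin1⟩).val, by have := (τ.1 ⟨i-1, hin1⟩).isLt; omega⟩ :=
      (congrFun hστ _).trans
        (concat_hi α.1 τ.1 _ ⟨i-1, hin1⟩ (by show 2*n+i-1 = 2*n + (i-1); omega))
    have hσB : σ.1 ⟨2*n+i, hB⟩ =
        ⟨2*n + (τ.1 ⟨i, hin2⟩).val, by have := (τ.1 ⟨i, hin2⟩).isLt; omega⟩ :=
      (congrFun hστ _).trans
        (concat_hi α.1 τ.1 _ ⟨i, hin2⟩ (by show 2*n+i = 2*n + i; rfl))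
    funext y
    rw [TLe_apply (2*n') i τ.1 y ⟨i-1, hin1⟩ ⟨i, hin2⟩
      (by show i-1 = (i-1) % (2*n'); rw [Nat.mod_eq_of_lt hin1])
      (by show i = i % (2*n'); rw [Nat.mod_eq_of_lt hin2])]
    by_cases hya : y = ⟨i-1, hin1⟩
    · rw [if_pos hya, hya, hβ1]
    rw [if_neg hya]
    by_cases hyb : y = ⟨i, hin2⟩
    · rw [if_pos hyb, hyb, hβ2]
    rw [if_neg hyb]
    have hyI := y.isLt
    obtain ⟨x, hxv⟩ : ∃ x : Fin (2*(n+n')), x.val = 2*n + y.val :=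
      ⟨⟨2*n + y.val, by omega⟩, rfl⟩
    have hxa : x ≠ ⟨2*n+i-1, hA⟩ := by
      intro he
      apply hya
      have hv : x.val = 2*n+i-1 := congrArg Fin.val he
      exact Fin.ext (show y.val = i-1 by omega)
    have hxb : x ≠ ⟨2*n+i, hB⟩ := by
      intro he
      apply hyb
      have hv : x.val = 2*n+i := congrArg Fin.val he
      exact Fin.ext (show y.val = i by omega)
    have h1 := hpt x
    rw [if_neg hxa, if_neg hxb, concat_hi α.1 β.1 x y hxv] at h1
    have hτy : σ.1 x = ⟨2*n + (τ.1 y).val, by have := (τ.1 y).isLt; omega⟩ :=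
      (congrFun hστ x).trans (concat_hi α.1 τ.1 x y hxv)
    by_cases hta : τ.1 y = ⟨i-1, hin1⟩
    · rw [if_pos hta]
      have hvta : (τ.1 y).val = i-1 := congrArg Fin.val hta
      have hfxa : σ.1 x = ⟨2*n+i-1, hA⟩ := by
        rw [hτy]
        exact Fin.ext (show 2*n + (τ.1 y).val = 2*n+i-1 by omega)
      rw [if_pos hfxa, hσB] at h1
      have hv : 2*n + (τ.1 ⟨i, hin2⟩).val = 2*n + (β.1 y).val := congrArg Fin.val h1
      exact Fin.ext (show (τ.1 ⟨i, hin2⟩).val = (β.1 y).val by omega)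
    rw [if_neg hta]
    by_cases htb : τ.1 y = ⟨i, hin2⟩
    · rw [if_pos htb]
      have hvtb : (τ.1 y).val = i := congrArg Fin.val htb
      have hfxa : σ.1 x ≠ ⟨2*n+i-1, hA⟩ := by
        intro he
        rw [hτy] at he
        have hv : 2*n + (τ.1 y).val = 2*n+i-1 := congrArg Fin.val he
        omega
      have hfxb : σ.1 x = ⟨2*n+i, hB⟩ := by
        rw [hτy]
        exact Fin.ext (show 2*n + (τ.1 y).val = 2*n+i by omega)
      rw [if_neg hfxa, if_pos hfxb, hσA] at h1
      have hv : 2*n + (τ.1 ⟨i-1, hin1⟩).val = 2*n + (β.1 y).val := congrArg Fin.val h1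
      exact Fin.ext (show (τ.1 ⟨i-1, hin1⟩).val = (β.1 y).val by omega)
    · rw [if_neg htb]
      have hfxa : σ.1 x ≠ ⟨2*n+i-1, hA⟩ := by
        intro he
        apply hta
        rw [hτy] at he
        have hv : 2*n + (τ.1 y).val = 2*n+i-1 := congrArg Fin.val he
        exact Fin.ext (show (τ.1 y).val = i-1 by omega)
      have hfxb : σ.1 x ≠ ⟨2*n+i, hB⟩ := by
        intro he
        apply htb
        rw [hτy] at he
        have hv : 2*n + (τ.1 y).val = 2*n+i := congrArg Fin.val he
        exact Fin.ext (show (τ.1 y).val = i by omega)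
      rw [if_neg hfxa, if_neg hfxb, hτy] at h1
      have hv : 2*n + (τ.1 y).val = 2*n + (β.1 y).val := congrArg Fin.val h1
      exact Fin.ext (show (τ.1 y).val = (β.1 y).val by omega)

theorem stmt3 (n n' : ℕ) (α : NCM n) (β γ : NCM n') (i : ℕ)
    (hi1 : 2 ≤ i) (hi2 : i ≤ 2*n' - 2) (h : UpArrow n' β.1 γ.1 i)
    (σ : NCM (n + n')) :
    TLe (2*(n+n')) (2*n + i) σ.1 = concatF n n' α.1 β.1 ↔
      ∃ τ : NCM n', TLe (2*n') i τ.1 = β.1 ∧ σ.1 = concatF n n' α.1 τ.1 := by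
  constructor
  · intro hl
    exact fwd_dir n n' α β γ i hi1 hi2 h σ hl
  · rintro ⟨τ, h1, h2⟩
    exact bwd_dir n n' α β i hi1 hi2 σ τ h1 h2
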